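/- For interior indices, the one-dimensional pre-wavelet φ_{t,i} = v_{t,i} − (3/5)(v_{t,i+1} + v_{t,i−1}) + (1/10)(v_{t,i+2} + v_{t,i−2}) of level t ≥ 1 is L²-orthogonal on [0,1] to every piecewise-linear nodal basis function v_{t−1,j} of level t−1, i.e. ∫₀¹ φ_{t,i}(x) v_{t−1,j}(x) dx = 0 for all j ∈ I_{t−1}. -/

import Mathlib

open MeasureTheory intervalIntegral

/-- The one-dimensional piecewise linear nodal (hat) basis function of level `t`
at node `2^{-(t+1)} i`, with mesh size `2^{-(t+1)}`. -/
noncomputable def hat (t i : ℕ) (x : ℝ) : ℝ :=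
  max 0 (1 - |x * 2 ^ (t + 1) - (i : ℝ)|)

noncomputable def H (u : ℝ) : ℝ := max 0 (1 - |u|)
@[fun_prop] lemma H_cont : Continuous H := by unfold H; fun_prop
lemma H_zero {u : ℝ} (hu : 1 ≤ |u|) : H u = 0 := by
  unfold H; rw [max_eq_left]; linarith
lemma H_neg {u : ℝ} (h : -1 ≤ u) (h' : u ≤ 0) : H u = 1 + u := by
  unfold H; rw [abs_of_nonpos h', max_eq_right] <;> linarith
lemma H_pos {u : ℝ} (h : 0 ≤ u) (h' : u ≤ 1) : H u = 1 - u := by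
  unfold H; rw [abs_of_nonneg h, max_eq_right] <;> linarith

lemma Hprod_zero {d : ℝ} (hd : 2 ≤ |d|) (u : ℝ) : H u * H (u - d) = 0 := by
  rcases le_or_gt 1 |u| with h|h
  · rw [H_zero h, zero_mul]
  · rw [H_zero (show (1:ℝ) ≤ |u - d| by
      have := abs_sub_abs_le_abs_sub d u
      rw [abs_sub_comm] at this; linarith), mul_zero]

lemma Kfar {d : ℝ} (hd : 2 ≤ |d|) : ∫ u in (-1:ℝ)..1, H u * H (u - d) = 0 := by
  simp [Hprod_zero hd]

lemma K0 : ∫ u in (-1:ℝ)..1, H u * H (u - 0) = 2/3 := by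
  have hi : ∀ a b : ℝ, IntervalIntegrable (fun u => H u * H (u - 0)) volume a b :=
    fun a b => (H_cont.mul (H_cont.comp (by fun_prop))).intervalIntegrable a b
  rw [← integral_add_adjacent_intervals (hi (-1) 0) (hi 0 1)]
  have e1 : ∫ u in (-1:ℝ)..0, H u * H (u - 0) = ∫ u in (-1:ℝ)..0, (1+u)^2 := by
    apply integral_congr; intro x hx
    rw [Set.uIcc_of_le (by norm_num : (-1:ℝ) ≤ 0)] at hx
    show H x * H (x - 0) = (1+x)^2
    rw [sub_zero, H_neg hx.1 hx.2]; ring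
  have e2 : ∫ u in (0:ℝ)..1, H u * H (u - 0) = ∫ u in (0:ℝ)..1, (1-u)^2 := by
    apply integral_congr; intro x hx
    rw [Set.uIcc_of_le (by norm_num : (0:ℝ) ≤ 1)] at hx
    show H x * H (x - 0) = (1-x)^2
    rw [sub_zero, H_pos hx.1 hx.2]; ring
  rw [e1, e2]
  rw [integral_eq_sub_of_hasDerivAt (a := (-1:ℝ)) (b := (0:ℝ)) (f := fun v : ℝ => (1+v)^3/3)
    (fun x _ => by
      have := (((hasDerivAt_id x).const_add 1).pow 3).div_const 3
      convert this using 1 <;> first | rfl | (simp only [id_eq]; ring))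
    ((by fun_prop : Continuous fun u : ℝ => (1+u)^2).intervalIntegrable _ _)]
  rw [integral_eq_sub_of_hasDerivAt (a := (0:ℝ)) (b := (1:ℝ)) (f := fun v : ℝ => -((1 + -v)^3/3))
    (fun x _ => by
      have := ((((hasDerivAt_id x).neg.const_add 1).pow 3).div_const 3).neg
      convert this using 1 <;> first | rfl | (simp only [id_eq, Pi.neg_apply]; ring))
    ((by fun_prop : Continuous fun u : ℝ => (1-u)^2).intervalIntegrable _ _)]
  norm_num

lemma K1 : ∫ u in (-1:ℝ)..1, H u * H (u - 1) = 1/6 := by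
  have hi : ∀ a b : ℝ, IntervalIntegrable (fun u => H u * H (u - 1)) volume a b :=
    fun a b => (H_cont.mul (H_cont.comp (by fun_prop))).intervalIntegrable a b
  rw [← integral_add_adjacent_intervals (hi (-1) 0) (hi 0 1)]
  have e1 : ∫ u in (-1:ℝ)..0, H u * H (u - 1) = 0 := by
    have : ∫ u in (-1:ℝ)..0, H u * H (u - 1) = ∫ u in (-1:ℝ)..0, (0:ℝ) := by
      apply integral_congr; intro x hx
      rw [Set.uIcc_of_le (by norm_num : (-1:ℝ) ≤ 0)] at hx
      show H x * H (x - 1) = 0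
      rw [H_zero (show (1:ℝ) ≤ |x - 1| by
        rw [abs_of_nonpos (by linarith [hx.2])]; linarith [hx.2]), mul_zero]
    rw [this]; simp
  have e2 : ∫ u in (0:ℝ)..1, H u * H (u - 1) = ∫ u in (0:ℝ)..1, (1-u)*u := by
    apply integral_congr; intro x hx
    rw [Set.uIcc_of_le (by norm_num : (0:ℝ) ≤ 1)] at hx
    show H x * H (x - 1) = (1-x)*x
    rw [H_pos hx.1 hx.2, H_neg (by linarith [hx.1]) (by linarith [hx.2])]; ring
  rw [e1, e2]
  rw [integral_eq_sub_of_hasDerivAt (f := fun v : ℝ => v^2/2 - v^3/3)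
    (fun x _ => by
      have := (((hasDerivAt_id x).pow 2).div_const 2).sub
        (((hasDerivAt_id x).pow 3).div_const 3)
      convert this using 1 <;> first | rfl | (simp only [id_eq]; ring))
    ((by fun_prop : Continuous fun u : ℝ => (1-u)*u).intervalIntegrable _ _)]
  norm_num

lemma Km1 : ∫ u in (-1:ℝ)..1, H u * H (u - (-1)) = 1/6 := by
  have hi : ∀ a b : ℝ, IntervalIntegrable (fun u => H u * H (u - (-1))) volume a b :=
    fun a b => (H_cont.mul (H_cont.comp (by fun_prop))).intervalIntegrable a b
  rw [← integral_add_adjacent_intervals (hi (-1) 0) (hi 0 1)]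
  have e2 : ∫ u in (0:ℝ)..1, H u * H (u - (-1)) = 0 := by
    have : ∫ u in (0:ℝ)..1, H u * H (u - (-1)) = ∫ u in (0:ℝ)..1, (0:ℝ) := by
      apply integral_congr; intro x hx
      rw [Set.uIcc_of_le (by norm_num : (0:ℝ) ≤ 1)] at hx
      show H x * H (x - (-1)) = 0
      rw [H_zero (show (1:ℝ) ≤ |x - (-1)| by
        rw [abs_of_nonneg (by linarith [hx.1])]; linarith [hx.1]), mul_zero]
    rw [this]; simp
  have e1 : ∫ u in (-1:ℝ)..0, H u * H (u - (-1)) = ∫ u in (-1:ℝ)..0, (1+u)*(-u) := by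
    apply integral_congr; intro x hx
    rw [Set.uIcc_of_le (by norm_num : (-1:ℝ) ≤ 0)] at hx
    show H x * H (x - (-1)) = (1+x)*(-x)
    rw [H_neg hx.1 hx.2, H_pos (by linarith [hx.1]) (by linarith [hx.2])]; ring
  rw [e1, e2]
  rw [integral_eq_sub_of_hasDerivAt (f := fun v : ℝ => -(v^2/2) - v^3/3)
    (fun x _ => by
      have := ((((hasDerivAt_id x).pow 2).div_const 2).neg).sub
        (((hasDerivAt_id x).pow 3).div_const 3)
      convert this using 1 <;> first | rfl | (simp only [id_eq]; ring))
    ((by fun_prop : Continuous fun u : ℝ => (1+u)*(-u)).intervalIntegrable _ _)]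
  norm_num

lemma J_eq (c a b : ℝ) (hc : 0 < c) (ha : 1 ≤ a) (ha' : a ≤ c - 1) :
    ∫ x in (0:ℝ)..1, H (x*c - a) * H (x*c - b)
      = c⁻¹ * ∫ u in (-1:ℝ)..1, H u * H (u - (b - a)) := by
  have hint : ∀ p q : ℝ, IntervalIntegrable (fun u => H u * H (u - (b - a))) volume p q :=
    fun p q => (H_cont.mul (H_cont.comp (by fun_prop))).intervalIntegrable p q
  have step1 : ∫ x in (0:ℝ)..1, H (x*c - a) * H (x*c - b)
      = c⁻¹ • ∫ u in (0*c:ℝ)..(1*c), H (u - a) * H (u - b) := by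
    exact integral_comp_mul_right (fun u => H (u - a) * H (u - b)) hc.ne'
  rw [step1]
  have step2 : ∫ u in (0*c:ℝ)..(1*c), H (u - a) * H (u - b)
      = ∫ v in (0*c - a)..(1*c - a), H v * H (v - (b - a)) := by
    rw [← integral_comp_sub_right (fun v => H v * H (v - (b - a))) a]
    apply integral_congr; intro x _
    show H (x - a) * H (x - b) = H (x - a) * H (x - a - (b - a))
    rw [show x - a - (b - a) = x - b from by ring]
  rw [step2]
  have z1 : ∫ v in (0*c - a)..(-1:ℝ), H v * H (v - (b - a)) = 0 := by
    have : ∫ v in (0*c - a)..(-1:ℝ), H v * H (v - (b - a))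
        = ∫ v in (0*c - a)..(-1:ℝ), (0:ℝ) := by
      apply integral_congr; intro x hx
      rw [Set.uIcc_of_le (by linarith : 0*c - a ≤ -1)] at hx
      show H x * H (x - (b - a)) = 0
      rw [H_zero (show (1:ℝ) ≤ |x| by
        rw [abs_of_nonpos (by linarith [hx.2])]; linarith [hx.2]), zero_mul]
    rw [this]; simp
  have z2 : ∫ v in (1:ℝ)..(1*c - a), H v * H (v - (b - a)) = 0 := by
    have : ∫ v in (1:ℝ)..(1*c - a), H v * H (v - (b - a))
        = ∫ v in (1:ℝ)..(1*c - a), (0:ℝ) := by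
      apply integral_congr; intro x hx
      rw [Set.uIcc_of_le (by linarith : (1:ℝ) ≤ 1*c - a)] at hx
      show H x * H (x - (b - a)) = 0
      rw [H_zero (show (1:ℝ) ≤ |x| by
        rw [abs_of_nonneg (by linarith [hx.1])]; exact hx.1), zero_mul]
    rw [this]; simp
  have split : ∫ v in (0*c - a)..(1*c - a), H v * H (v - (b - a))
      = (∫ v in (0*c - a)..(-1:ℝ), H v * H (v - (b - a)))
        + ((∫ v in (-1:ℝ)..1, H v * H (v - (b - a)))
          + ∫ v in (1:ℝ)..(1*c - a), H v * H (v - (b - a))) := by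
    rw [integral_add_adjacent_intervals (hint _ _) (hint _ _),
      integral_add_adjacent_intervals (hint _ _) (hint _ _)]
  rw [split, z1, z2, zero_add, add_zero, smul_eq_mul]
lemma twoscale (s : ℝ) :
    H (s/2) = 1/2 * H (s+1) + H s + 1/2 * H (s-1) := by
  rcases le_total s (-2) with hA|hA
  · rw [H_zero (by rw [abs_of_nonpos (by linarith : s/2 ≤ 0)]; linarith),
      H_zero (by rw [abs_of_nonpos (by linarith : s+1 ≤ 0)]; linarith),
      H_zero (by rw [abs_of_nonpos (by linarith : s ≤ 0)]; linarith),
      H_zero (by rw [abs_of_nonpos (by linarith : s-1 ≤ 0)]; linarith)]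
    ring
  rcases le_total s (-1) with hB|hB
  · rw [H_neg (by linarith) (by linarith), H_neg (by linarith) (by linarith),
      H_zero (by rw [abs_of_nonpos (by linarith : s ≤ 0)]; linarith),
      H_zero (by rw [abs_of_nonpos (by linarith : s-1 ≤ 0)]; linarith)]
    ring
  rcases le_total s 0 with hC|hC
  · rw [H_neg (by linarith) (by linarith), H_pos (by linarith) (by linarith),
      H_neg (by linarith) (by linarith),
      H_zero (by rw [abs_of_nonpos (by linarith : s-1 ≤ 0)]; linarith)]
    ring
  rcases le_total s 1 with hD|hD
  · rw [H_pos (by linarith) (by linarith),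
      H_zero (by rw [abs_of_nonneg (by linarith : (0:ℝ) ≤ s+1)]; linarith),
      H_pos (by linarith) (by linarith), H_neg (by linarith) (by linarith)]
    ring
  rcases le_total s 2 with hE|hE
  · rw [H_pos (by linarith) (by linarith),
      H_zero (by rw [abs_of_nonneg (by linarith : (0:ℝ) ≤ s+1)]; linarith),
      H_zero (by rw [abs_of_nonneg (by linarith : (0:ℝ) ≤ s)]; linarith),
      H_pos (by linarith) (by linarith)]
    ring
  · rw [H_zero (by rw [abs_of_nonneg (by linarith : (0:ℝ) ≤ s/2)]; linarith),
      H_zero (by rw [abs_of_nonneg (by linarith : (0:ℝ) ≤ s+1)]; linarith),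
      H_zero (by rw [abs_of_nonneg (by linarith : (0:ℝ) ≤ s)]; linarith),
      H_zero (by rw [abs_of_nonneg (by linarith : (0:ℝ) ≤ s-1)]; linarith)]
    ring

lemma Fint (c I b : ℝ) (hc : 0 < c) (h1 : 1 ≤ I - 2) (h2 : I + 2 ≤ c - 1) :
    ∫ x in (0:ℝ)..1, (H (x*c - I) - 3/5 * (H (x*c - (I+1)) + H (x*c - (I-1)))
        + 1/10 * (H (x*c - (I+2)) + H (x*c - (I-2)))) * H (x*c - b)
      = (1:ℝ) * (c⁻¹ * ∫ u in (-1:ℝ)..1, H u * H (u - (b - (I)))) + (-3/5:ℝ) * (c⁻¹ * ∫ u in (-1:ℝ)..1, H u * H (u - (b - (I + 1)))) + (-3/5:ℝ) * (c⁻¹ * ∫ u in (-1:ℝ)..1, H u * H (u - (b - (I - 1)))) + (1/10:ℝ) * (c⁻¹ * ∫ u in (-1:ℝ)..1, H u * H (u - (b - (I + 2)))) + (1/10:ℝ) * (c⁻¹ * ∫ u in (-1:ℝ)..1, H u * H (u - (b - (I - 2)))) := by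
  have e0 : ∫ x in (0:ℝ)..1, (H (x*c - I) - 3/5 * (H (x*c - (I+1)) + H (x*c - (I-1)))
        + 1/10 * (H (x*c - (I+2)) + H (x*c - (I-2)))) * H (x*c - b)
      = ∫ x in (0:ℝ)..1, ((1:ℝ) * (H (x*c - (I)) * H (x*c - b)) + ((-3/5:ℝ) * (H (x*c - (I + 1)) * H (x*c - b)) + ((-3/5:ℝ) * (H (x*c - (I - 1)) * H (x*c - b)) + ((1/10:ℝ) * (H (x*c - (I + 2)) * H (x*c - b)) + ((1/10:ℝ) * (H (x*c - (I - 2)) * H (x*c - b))))))) := by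
    apply integral_congr; intro x _
    show (H (x*c - I) - 3/5 * (H (x*c - (I+1)) + H (x*c - (I-1)))
        + 1/10 * (H (x*c - (I+2)) + H (x*c - (I-2)))) * H (x*c - b) = (1:ℝ) * (H (x*c - (I)) * H (x*c - b)) + ((-3/5:ℝ) * (H (x*c - (I + 1)) * H (x*c - b)) + ((-3/5:ℝ) * (H (x*c - (I - 1)) * H (x*c - b)) + ((1/10:ℝ) * (H (x*c - (I + 2)) * H (x*c - b)) + ((1/10:ℝ) * (H (x*c - (I - 2)) * H (x*c - b))))))
    ring
  rw [e0]
  have s0 : ∫ x in (0:ℝ)..1, ((1:ℝ) * (H (x*c - (I)) * H (x*c - b)) + ((-3/5:ℝ) * (H (x*c - (I + 1)) * H (x*c - b)) + ((-3/5:ℝ) * (H (x*c - (I - 1)) * H (x*c - b)) + ((1/10:ℝ) * (H (x*c - (I + 2)) * H (x*c - b)) + ((1/10:ℝ) * (H (x*c - (I - 2)) * H (x*c - b)))))))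
      = (∫ x in (0:ℝ)..1, (1:ℝ) * (H (x*c - (I)) * H (x*c - b))) + ∫ x in (0:ℝ)..1, ((-3/5:ℝ) * (H (x*c - (I + 1)) * H (x*c - b)) + ((-3/5:ℝ) * (H (x*c - (I - 1)) * H (x*c - b)) + ((1/10:ℝ) * (H (x*c - (I + 2)) * H (x*c - b)) + ((1/10:ℝ) * (H (x*c - (I - 2)) * H (x*c - b)))))) :=
    integral_add (Continuous.intervalIntegrable (by fun_prop) _ _) (Continuous.intervalIntegrable (by fun_prop) _ _)
  have s1 : ∫ x in (0:ℝ)..1, ((-3/5:ℝ) * (H (x*c - (I + 1)) * H (x*c - b)) + ((-3/5:ℝ) * (H (x*c - (I - 1)) * H (x*c - b)) + ((1/10:ℝ) * (H (x*c - (I + 2)) * H (x*c - b)) + ((1/10:ℝ) * (H (x*c - (I - 2)) * H (x*c - b))))))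
      = (∫ x in (0:ℝ)..1, (-3/5:ℝ) * (H (x*c - (I + 1)) * H (x*c - b))) + ∫ x in (0:ℝ)..1, ((-3/5:ℝ) * (H (x*c - (I - 1)) * H (x*c - b)) + ((1/10:ℝ) * (H (x*c - (I + 2)) * H (x*c - b)) + ((1/10:ℝ) * (H (x*c - (I - 2)) * H (x*c - b))))) :=
    integral_add (Continuous.intervalIntegrable (by fun_prop) _ _) (Continuous.intervalIntegrable (by fun_prop) _ _)
  have s2 : ∫ x in (0:ℝ)..1, ((-3/5:ℝ) * (H (x*c - (I - 1)) * H (x*c - b)) + ((1/10:ℝ) * (H (x*c - (I + 2)) * H (x*c - b)) + ((1/10:ℝ) * (H (x*c - (I - 2)) * H (x*c - b)))))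
      = (∫ x in (0:ℝ)..1, (-3/5:ℝ) * (H (x*c - (I - 1)) * H (x*c - b))) + ∫ x in (0:ℝ)..1, ((1/10:ℝ) * (H (x*c - (I + 2)) * H (x*c - b)) + ((1/10:ℝ) * (H (x*c - (I - 2)) * H (x*c - b)))) :=
    integral_add (Continuous.intervalIntegrable (by fun_prop) _ _) (Continuous.intervalIntegrable (by fun_prop) _ _)
  have s3 : ∫ x in (0:ℝ)..1, ((1/10:ℝ) * (H (x*c - (I + 2)) * H (x*c - b)) + ((1/10:ℝ) * (H (x*c - (I - 2)) * H (x*c - b))))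
      = (∫ x in (0:ℝ)..1, (1/10:ℝ) * (H (x*c - (I + 2)) * H (x*c - b))) + ∫ x in (0:ℝ)..1, ((1/10:ℝ) * (H (x*c - (I - 2)) * H (x*c - b))) :=
    integral_add (Continuous.intervalIntegrable (by fun_prop) _ _) (Continuous.intervalIntegrable (by fun_prop) _ _)
  rw [s0, s1, s2, s3]
  simp only [intervalIntegral.integral_const_mul]
  rw [J_eq c (I) b hc (by linarith) (by linarith)]
  rw [J_eq c (I + 1) b hc (by linarith) (by linarith)]
  rw [J_eq c (I - 1) b hc (by linarith) (by linarith)]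
  rw [J_eq c (I + 2) b hc (by linarith) (by linarith)]
  rw [J_eq c (I - 2) b hc (by linarith) (by linarith)]
  ring

lemma main_real (c I J : ℝ) (hc : 0 < c) (h1 : 1 ≤ I - 2) (h2 : I + 2 ≤ c - 1)
    (hmex : ∃ m : ℤ, I - J = 2*m + 1) :
    ∫ x in (0:ℝ)..1, (H (x*c - I) - 3/5 * (H (x*c - (I+1)) + H (x*c - (I-1))) + 1/10 * (H (x*c - (I+2)) + H (x*c - (I-2)))) * (1/2 * H (x*c - (J-1)) + H (x*c - J) + 1/2 * H (x*c - (J+1))) = 0 := by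
  obtain ⟨m, hmm⟩ := hmex
  by_cases hfar : m ≤ -3 ∨ 2 ≤ m
  · have hbig : (5:ℝ) ≤ |I - J| := by
      rw [hmm]
      have hm' : ((m:ℝ) ≤ -3) ∨ (2 ≤ (m:ℝ)) := by
        rcases hfar with h|h
        · left; exact_mod_cast h
        · right; exact_mod_cast h
      rcases hm' with h|h
      · rw [abs_of_nonpos (by linarith)]; linarith
      · rw [abs_of_nonneg (by linarith)]; linarith
    have hz : ∀ x : ℝ, (H (x*c - I) - 3/5 * (H (x*c - (I+1)) + H (x*c - (I-1))) + 1/10 * (H (x*c - (I+2)) + H (x*c - (I-2)))) * (1/2 * H (x*c - (J-1)) + H (x*c - J) + 1/2 * H (x*c - (J+1))) = 0 := by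
      intro x
      rcases le_or_gt 3 |x*c - I| with h|h
      · have z1 : H (x*c - I) = 0 := H_zero (by linarith)
        have z2 : H (x*c - (I+1)) = 0 := by
          apply H_zero
          have h2 := abs_sub_abs_le_abs_sub (x*c - I) (1:ℝ)
          rw [show x*c - I - (1:ℝ) = x*c - (I+1) from by ring] at h2
          have : |(1:ℝ)| ≤ 2 := by norm_num
          linarith
        have z3 : H (x*c - (I-1)) = 0 := by
          apply H_zero
          have h2 := abs_sub_abs_le_abs_sub (x*c - I) (-1:ℝ)
          rw [show x*c - I - (-1:ℝ) = x*c - (I-1) from by ring] at h2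
          have : |(-1:ℝ)| ≤ 2 := by norm_num
          linarith
        have z4 : H (x*c - (I+2)) = 0 := by
          apply H_zero
          have h2 := abs_sub_abs_le_abs_sub (x*c - I) (2:ℝ)
          rw [show x*c - I - (2:ℝ) = x*c - (I+2) from by ring] at h2
          have : |(2:ℝ)| ≤ 2 := by norm_num
          linarith
        have z5 : H (x*c - (I-2)) = 0 := by
          apply H_zero
          have h2 := abs_sub_abs_le_abs_sub (x*c - I) (-2:ℝ)
          rw [show x*c - I - (-2:ℝ) = x*c - (I-2) from by ring] at h2
          have : |(-2:ℝ)| ≤ 2 := by norm_num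
          linarith
        rw [z1, z2, z3, z4, z5]; ring
      · have hJ : 2 < |x*c - J| := by
          have h2 := abs_sub_abs_le_abs_sub (I - J) (I - x*c)
          rw [show I - J - (I - x*c) = x*c - J from by ring] at h2
          have h3 : |I - x*c| = |x*c - I| := abs_sub_comm _ _
          linarith
        have w1 : H (x*c - (J-1)) = 0 := by
          apply H_zero
          have h2 := abs_sub_abs_le_abs_sub (x*c - J) (-1:ℝ)
          rw [show x*c - J - (-1:ℝ) = x*c - (J-1) from by ring] at h2
          have : |(-1:ℝ)| ≤ 1 := by norm_num
          linarith
        have w2 : H (x*c - J) = 0 := H_zero (by linarith)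
        have w3 : H (x*c - (J+1)) = 0 := by
          apply H_zero
          have h2 := abs_sub_abs_le_abs_sub (x*c - J) (1:ℝ)
          rw [show x*c - J - (1:ℝ) = x*c - (J+1) from by ring] at h2
          have : |(1:ℝ)| ≤ 1 := by norm_num
          linarith
        rw [w1, w2, w3]; ring
    have e0 : ∫ x in (0:ℝ)..1, (H (x*c - I) - 3/5 * (H (x*c - (I+1)) + H (x*c - (I-1))) + 1/10 * (H (x*c - (I+2)) + H (x*c - (I-2)))) * (1/2 * H (x*c - (J-1)) + H (x*c - J) + 1/2 * H (x*c - (J+1)))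
        = ∫ x in (0:ℝ)..1, (0:ℝ) := by
      apply integral_congr; intro x _
      exact hz x
    rw [e0]; simp
  · push_neg at hfar
    have e0 : ∫ x in (0:ℝ)..1, (H (x*c - I) - 3/5 * (H (x*c - (I+1)) + H (x*c - (I-1))) + 1/10 * (H (x*c - (I+2)) + H (x*c - (I-2)))) * (1/2 * H (x*c - (J-1)) + H (x*c - J) + 1/2 * H (x*c - (J+1)))
        = ∫ x in (0:ℝ)..1, ((1/2:ℝ) * ((H (x*c - I) - 3/5 * (H (x*c - (I+1)) + H (x*c - (I-1))) + 1/10 * (H (x*c - (I+2)) + H (x*c - (I-2)))) * H (x*c - (J - 1))) + ((1:ℝ) * ((H (x*c - I) - 3/5 * (H (x*c - (I+1)) + H (x*c - (I-1))) + 1/10 * (H (x*c - (I+2)) + H (x*c - (I-2)))) * H (x*c - (J))) + ((1/2:ℝ) * ((H (x*c - I) - 3/5 * (H (x*c - (I+1)) + H (x*c - (I-1))) + 1/10 * (H (x*c - (I+2)) + H (x*c - (I-2)))) * H (x*c - (J + 1)))))) := by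
      apply integral_congr; intro x _
      show (H (x*c - I) - 3/5 * (H (x*c - (I+1)) + H (x*c - (I-1))) + 1/10 * (H (x*c - (I+2)) + H (x*c - (I-2)))) * (1/2 * H (x*c - (J-1)) + H (x*c - J) + 1/2 * H (x*c - (J+1))) = (1/2:ℝ) * ((H (x*c - I) - 3/5 * (H (x*c - (I+1)) + H (x*c - (I-1))) + 1/10 * (H (x*c - (I+2)) + H (x*c - (I-2)))) * H (x*c - (J - 1))) + ((1:ℝ) * ((H (x*c - I) - 3/5 * (H (x*c - (I+1)) + H (x*c - (I-1))) + 1/10 * (H (x*c - (I+2)) + H (x*c - (I-2)))) * H (x*c - (J))) + ((1/2:ℝ) * ((H (x*c - I) - 3/5 * (H (x*c - (I+1)) + H (x*c - (I-1))) + 1/10 * (H (x*c - (I+2)) + H (x*c - (I-2)))) * H (x*c - (J + 1)))))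
      ring
    rw [e0]
    have s0 : ∫ x in (0:ℝ)..1, ((1/2:ℝ) * ((H (x*c - I) - 3/5 * (H (x*c - (I+1)) + H (x*c - (I-1))) + 1/10 * (H (x*c - (I+2)) + H (x*c - (I-2)))) * H (x*c - (J - 1))) + ((1:ℝ) * ((H (x*c - I) - 3/5 * (H (x*c - (I+1)) + H (x*c - (I-1))) + 1/10 * (H (x*c - (I+2)) + H (x*c - (I-2)))) * H (x*c - (J))) + ((1/2:ℝ) * ((H (x*c - I) - 3/5 * (H (x*c - (I+1)) + H (x*c - (I-1))) + 1/10 * (H (x*c - (I+2)) + H (x*c - (I-2)))) * H (x*c - (J + 1))))))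
        = (∫ x in (0:ℝ)..1, (1/2:ℝ) * ((H (x*c - I) - 3/5 * (H (x*c - (I+1)) + H (x*c - (I-1))) + 1/10 * (H (x*c - (I+2)) + H (x*c - (I-2)))) * H (x*c - (J - 1)))) + ∫ x in (0:ℝ)..1, ((1:ℝ) * ((H (x*c - I) - 3/5 * (H (x*c - (I+1)) + H (x*c - (I-1))) + 1/10 * (H (x*c - (I+2)) + H (x*c - (I-2)))) * H (x*c - (J))) + ((1/2:ℝ) * ((H (x*c - I) - 3/5 * (H (x*c - (I+1)) + H (x*c - (I-1))) + 1/10 * (H (x*c - (I+2)) + H (x*c - (I-2)))) * H (x*c - (J + 1))))) :=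
      integral_add (Continuous.intervalIntegrable (by fun_prop) _ _) (Continuous.intervalIntegrable (by fun_prop) _ _)
    have s1 : ∫ x in (0:ℝ)..1, ((1:ℝ) * ((H (x*c - I) - 3/5 * (H (x*c - (I+1)) + H (x*c - (I-1))) + 1/10 * (H (x*c - (I+2)) + H (x*c - (I-2)))) * H (x*c - (J))) + ((1/2:ℝ) * ((H (x*c - I) - 3/5 * (H (x*c - (I+1)) + H (x*c - (I-1))) + 1/10 * (H (x*c - (I+2)) + H (x*c - (I-2)))) * H (x*c - (J + 1)))))
        = (∫ x in (0:ℝ)..1, (1:ℝ) * ((H (x*c - I) - 3/5 * (H (x*c - (I+1)) + H (x*c - (I-1))) + 1/10 * (H (x*c - (I+2)) + H (x*c - (I-2)))) * H (x*c - (J)))) + ∫ x in (0:ℝ)..1, ((1/2:ℝ) * ((H (x*c - I) - 3/5 * (H (x*c - (I+1)) + H (x*c - (I-1))) + 1/10 * (H (x*c - (I+2)) + H (x*c - (I-2)))) * H (x*c - (J + 1)))) :=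
      integral_add (Continuous.intervalIntegrable (by fun_prop) _ _) (Continuous.intervalIntegrable (by fun_prop) _ _)
    rw [s0, s1]
    simp only [intervalIntegral.integral_const_mul]
    rw [Fint c I (J - 1) hc h1 h2]
    rw [Fint c I (J) hc h1 h2]
    rw [Fint c I (J + 1) hc h1 h2]
    have hcase : m = -2 ∨ m = -1 ∨ m = 0 ∨ m = 1 := by omega
    rcases hcase with hk|hk|hk|hk <;> subst hk
    · -- m = -2, I = J + -3
      have hI : I = J + (-3) := by push_cast at hmm; linarith
      rw [show J - 1 - (I) = (2:ℝ) from by rw [hI]; ring,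
        show J - 1 - (I + 1) = (1:ℝ) from by rw [hI]; ring,
        show J - 1 - (I - 1) = (3:ℝ) from by rw [hI]; ring,
        show J - 1 - (I + 2) = (0:ℝ) from by rw [hI]; ring,
        show J - 1 - (I - 2) = (4:ℝ) from by rw [hI]; ring,
        show J - (I) = (3:ℝ) from by rw [hI]; ring,
        show J - (I + 1) = (2:ℝ) from by rw [hI]; ring,
        show J - (I - 1) = (4:ℝ) from by rw [hI]; ring,
        show J - (I + 2) = (1:ℝ) from by rw [hI]; ring,
        show J - (I - 2) = (5:ℝ) from by rw [hI]; ring,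
        show J + 1 - (I) = (4:ℝ) from by rw [hI]; ring,
        show J + 1 - (I + 1) = (3:ℝ) from by rw [hI]; ring,
        show J + 1 - (I - 1) = (5:ℝ) from by rw [hI]; ring,
        show J + 1 - (I + 2) = (2:ℝ) from by rw [hI]; ring,
        show J + 1 - (I - 2) = (6:ℝ) from by rw [hI]; ring]
      simp only [K0, K1, Kfar (d := (2:ℝ)) (by norm_num), Kfar (d := (3:ℝ)) (by norm_num), Kfar (d := (4:ℝ)) (by norm_num), Kfar (d := (5:ℝ)) (by norm_num), Kfar (d := (6:ℝ)) (by norm_num)]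
      ring
    · -- m = -1, I = J + -1
      have hI : I = J + (-1) := by push_cast at hmm; linarith
      rw [show J - 1 - (I) = (0:ℝ) from by rw [hI]; ring,
        show J - 1 - (I + 1) = (-1:ℝ) from by rw [hI]; ring,
        show J - 1 - (I - 1) = (1:ℝ) from by rw [hI]; ring,
        show J - 1 - (I + 2) = (-2:ℝ) from by rw [hI]; ring,
        show J - 1 - (I - 2) = (2:ℝ) from by rw [hI]; ring,
        show J - (I) = (1:ℝ) from by rw [hI]; ring,
        show J - (I + 1) = (0:ℝ) from by rw [hI]; ring,
        show J - (I - 1) = (2:ℝ) from by rw [hI]; ring,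
        show J - (I + 2) = (-1:ℝ) from by rw [hI]; ring,
        show J - (I - 2) = (3:ℝ) from by rw [hI]; ring,
        show J + 1 - (I) = (2:ℝ) from by rw [hI]; ring,
        show J + 1 - (I + 1) = (1:ℝ) from by rw [hI]; ring,
        show J + 1 - (I - 1) = (3:ℝ) from by rw [hI]; ring,
        show J + 1 - (I + 2) = (0:ℝ) from by rw [hI]; ring,
        show J + 1 - (I - 2) = (4:ℝ) from by rw [hI]; ring]
      simp only [Kfar (d := (-2:ℝ)) (by norm_num), Km1, K0, K1, Kfar (d := (2:ℝ)) (by norm_num), Kfar (d := (3:ℝ)) (by norm_num), Kfar (d := (4:ℝ)) (by norm_num)]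
      ring
    · -- m = 0, I = J + 1
      have hI : I = J + (1) := by push_cast at hmm; linarith
      rw [show J - 1 - (I) = (-2:ℝ) from by rw [hI]; ring,
        show J - 1 - (I + 1) = (-3:ℝ) from by rw [hI]; ring,
        show J - 1 - (I - 1) = (-1:ℝ) from by rw [hI]; ring,
        show J - 1 - (I + 2) = (-4:ℝ) from by rw [hI]; ring,
        show J - 1 - (I - 2) = (0:ℝ) from by rw [hI]; ring,
        show J - (I) = (-1:ℝ) from by rw [hI]; ring,
        show J - (I + 1) = (-2:ℝ) from by rw [hI]; ring,
        show J - (I - 1) = (0:ℝ) from by rw [hI]; ring,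
        show J - (I + 2) = (-3:ℝ) from by rw [hI]; ring,
        show J - (I - 2) = (1:ℝ) from by rw [hI]; ring,
        show J + 1 - (I) = (0:ℝ) from by rw [hI]; ring,
        show J + 1 - (I + 1) = (-1:ℝ) from by rw [hI]; ring,
        show J + 1 - (I - 1) = (1:ℝ) from by rw [hI]; ring,
        show J + 1 - (I + 2) = (-2:ℝ) from by rw [hI]; ring,
        show J + 1 - (I - 2) = (2:ℝ) from by rw [hI]; ring]
      simp only [Kfar (d := (-4:ℝ)) (by norm_num), Kfar (d := (-3:ℝ)) (by norm_num), Kfar (d := (-2:ℝ)) (by norm_num), Km1, K0, K1, Kfar (d := (2:ℝ)) (by norm_num)]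
      ring
    · -- m = 1, I = J + 3
      have hI : I = J + (3) := by push_cast at hmm; linarith
      rw [show J - 1 - (I) = (-4:ℝ) from by rw [hI]; ring,
        show J - 1 - (I + 1) = (-5:ℝ) from by rw [hI]; ring,
        show J - 1 - (I - 1) = (-3:ℝ) from by rw [hI]; ring,
        show J - 1 - (I + 2) = (-6:ℝ) from by rw [hI]; ring,
        show J - 1 - (I - 2) = (-2:ℝ) from by rw [hI]; ring,
        show J - (I) = (-3:ℝ) from by rw [hI]; ring,
        show J - (I + 1) = (-4:ℝ) from by rw [hI]; ring,
        show J - (I - 1) = (-2:ℝ) from by rw [hI]; ring,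
        show J - (I + 2) = (-5:ℝ) from by rw [hI]; ring,
        show J - (I - 2) = (-1:ℝ) from by rw [hI]; ring,
        show J + 1 - (I) = (-2:ℝ) from by rw [hI]; ring,
        show J + 1 - (I + 1) = (-3:ℝ) from by rw [hI]; ring,
        show J + 1 - (I - 1) = (-1:ℝ) from by rw [hI]; ring,
        show J + 1 - (I + 2) = (-4:ℝ) from by rw [hI]; ring,
        show J + 1 - (I - 2) = (0:ℝ) from by rw [hI]; ring]
      simp only [Kfar (d := (-6:ℝ)) (by norm_num), Kfar (d := (-5:ℝ)) (by norm_num), Kfar (d := (-4:ℝ)) (by norm_num), Kfar (d := (-3:ℝ)) (by norm_num), Kfar (d := (-2:ℝ)) (by norm_num), Km1, K0]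
      ring


/-- For interior indices `i` (odd, `3 ≤ i ≤ 2^{t+1}-3`), the pre-wavelet
`φ_{t,i} = v_{t,i} - (3/5)(v_{t,i+1}+v_{t,i-1}) + (1/10)(v_{t,i+2}+v_{t,i-2})`
of level `t ≥ 1` is L²-orthogonal on `[0,1]` to every nodal basis function
`v_{t-1,j}` of level `t-1`, `j ∈ I_{t-1} = {1,…,2^t-1}`. -/
theorem prewavelet_orth_coarse_hat (t i : ℕ) (ht : 1 ≤ t) (hodd : Odd i)
    (hlo : 3 ≤ i) (hhi : i ≤ 2 ^ (t + 1) - 3) :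
    ∀ j : ℕ, 1 ≤ j → j ≤ 2 ^ t - 1 →
      ∫ x in (0:ℝ)..1,
        (hat t i x - 3/5 * (hat t (i+1) x + hat t (i-1) x)
          + 1/10 * (hat t (i+2) x + hat t (i-2) x)) * hat (t-1) j x = 0 := by
  intro j hj hj'
  have h4 : 4 ≤ 2^(t+1) := by
    calc (4:ℕ) = 2^2 := rfl
    _ ≤ 2^(t+1) := Nat.pow_le_pow_right (by norm_num) (by omega)
  have hhi' : i + 3 ≤ 2^(t+1) := by omega
  have hc : (0:ℝ) < (2:ℝ)^(t+1) := by positivity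
  have h1 : 1 ≤ (i:ℝ) - 2 := by
    have : (3:ℝ) ≤ (i:ℝ) := by exact_mod_cast hlo
    linarith
  have h2 : (i:ℝ) + 2 ≤ (2:ℝ)^(t+1) - 1 := by
    have h5 : ((i:ℝ)) + 3 ≤ ((2^(t+1):ℕ):ℝ) := by exact_mod_cast hhi'
    have h6 : ((2^(t+1):ℕ):ℝ) = (2:ℝ)^(t+1) := by push_cast; ring
    linarith [h6 ▸ h5]
  have hmex : ∃ m : ℤ, (i:ℝ) - 2*(j:ℝ) = 2*m + 1 := by
    obtain ⟨n, hn⟩ := hodd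
    exact ⟨(n:ℤ) - (j:ℤ), by push_cast [hn]; ring⟩
  have key := main_real ((2:ℝ)^(t+1)) (i:ℝ) (2*(j:ℝ)) hc h1 h2 hmex
  refine (integral_congr (fun x _ => ?_)).trans key
  beta_reduce
  have cast1 : ((i+1:ℕ):ℝ) = (i:ℝ)+1 := by push_cast; ring
  have cast2 : ((i-1:ℕ):ℝ) = (i:ℝ)-1 := by
    rw [Nat.cast_sub (by omega)]; norm_num
  have cast3 : ((i+2:ℕ):ℝ) = (i:ℝ)+2 := by push_cast; ring
  have cast4 : ((i-2:ℕ):ℝ) = (i:ℝ)-2 := by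
    rw [Nat.cast_sub (by omega)]; norm_num
  have A0 : hat t i x = H (x * (2:ℝ)^(t+1) - (i:ℝ)) := rfl
  have A1 : hat t (i+1) x = H (x * (2:ℝ)^(t+1) - ((i:ℝ)+1)) := by
    unfold hat H; rw [cast1]
  have A2 : hat t (i-1) x = H (x * (2:ℝ)^(t+1) - ((i:ℝ)-1)) := by
    unfold hat H; rw [cast2]
  have A3 : hat t (i+2) x = H (x * (2:ℝ)^(t+1) - ((i:ℝ)+2)) := by
    unfold hat H; rw [cast3]
  have A4 : hat t (i-2) x = H (x * (2:ℝ)^(t+1) - ((i:ℝ)-2)) := by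
    unfold hat H; rw [cast4]
  have ht' : t - 1 + 1 = t := by omega
  have C0 : hat (t-1) j x
      = 1/2 * H (x*(2:ℝ)^(t+1) - (2*(j:ℝ)-1)) + H (x*(2:ℝ)^(t+1) - 2*(j:ℝ))
        + 1/2 * H (x*(2:ℝ)^(t+1) - (2*(j:ℝ)+1)) := by
    have hC : hat (t-1) j x = H (x * (2:ℝ)^t - (j:ℝ)) := by
      unfold hat H; rw [ht']
    rw [hC, show x * (2:ℝ)^t - (j:ℝ) = (x*(2:ℝ)^(t+1) - 2*(j:ℝ))/2 from by
        rw [pow_succ]; ring, twoscale]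
    rw [show x*(2:ℝ)^(t+1) - 2*(j:ℝ) + 1 = x*(2:ℝ)^(t+1) - (2*(j:ℝ)-1) from by ring,
        show x*(2:ℝ)^(t+1) - 2*(j:ℝ) - 1 = x*(2:ℝ)^(t+1) - (2*(j:ℝ)+1) from by ring]
  rw [A0, A1, A2, A3, A4, C0]
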